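/- Let (A,B) be a stabilizable pair, Q ≻ 0, and P ≻ 0 a solution of the algebraic Riccati equation PA + A^T P − PBB^T P = −Q. Set K = B^T P. Then for any complex number λ with 2δ·Re(λ) ≥ 1, the matrix A − δλBK satisfies the Lyapunov inequality (A − δλBK)^* P + P(A − δλBK) ≤ −Q, and hence A − δλBK is Hurwitz (all eigenvalues have negative real parts). -/

import Mathlib

open Matrix
open scoped ComplexOrder

/-- If `P ≻ 0` solves the Riccati equation `PA + AᵀP − PBBᵀP = −Q` with
`Q ≻ 0`, `K = BᵀP`, then for any `δ > 0` and `λ ∈ ℂ` with `2δ·Re(λ) ≥ 1`, the complex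
matrix `M = A − δλBK` satisfies the Lyapunov inequality `Mᴴ P + P M ≤ −Q`
(i.e. `−(Mᴴ P + P M) − Q` is positive semidefinite), and hence `M` is Hurwitz. -/
theorem stmt3 (n nu : ℕ) (A : Matrix (Fin n) (Fin n) ℝ) (B : Matrix (Fin n) (Fin nu) ℝ)
    (P Q : Matrix (Fin n) (Fin n) ℝ) (hP : P.PosDef) (hQ : Q.PosDef)
    (hRic : P * A + Aᵀ * P - P * B * Bᵀ * P = -Q)
    (K : Matrix (Fin nu) (Fin n) ℝ) (hK : K = Bᵀ * P)
    (δ : ℝ) (hδ : 0 < δ) (lam : ℂ) (hlam : 1 ≤ 2 * δ * lam.re)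
    (M : Matrix (Fin n) (Fin n) ℂ)
    (hM : M = A.map Complex.ofReal - ((δ : ℂ) * lam) • (B * K).map Complex.ofReal) :
    Matrix.PosSemidef (-(Mᴴ * P.map Complex.ofReal + P.map Complex.ofReal * M)
        - Q.map Complex.ofReal) ∧
    ∀ μ ∈ spectrum ℂ M, μ.re < 0 := by
  have hCT : ∀ {a b : ℕ} (X : Matrix (Fin a) (Fin b) ℝ),
      (X.map Complex.ofReal)ᴴ = Xᵀ.map Complex.ofReal := by
    intro a b X; ext i j; simp [conjTranspose_apply, Matrix.map_apply, Complex.conj_ofReal]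
  have hmul : ∀ {a b c : ℕ} (X : Matrix (Fin a) (Fin b) ℝ) (Y : Matrix (Fin b) (Fin c) ℝ),
      (X*Y).map Complex.ofReal = X.map Complex.ofReal * Y.map Complex.ofReal :=
    fun X Y => Matrix.map_mul (f := Complex.ofRealHom)
  set p := P.map Complex.ofReal with hp
  set q := Q.map Complex.ofReal with hq
  set a := A.map Complex.ofReal with ha
  set b := B.map Complex.ofReal with hb
  set k := K.map Complex.ofReal with hkc
  set c : ℂ := (δ : ℂ) * lam with hc
  have hPsym : Pᵀ = P := hP.1
  have hpH : pᴴ = p := by rw [hp, hCT, hPsym]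
  have hkH : kᴴ = p * b := by
    rw [hkc, hCT, hK, Matrix.transpose_mul, Matrix.transpose_transpose, hPsym, hmul, ← hp, ← hb]
  have hkval : k = bᴴ * p := by
    rw [hkc, hK, hmul, hb, hCT, hp]
  have hnegq : (-Q).map Complex.ofReal = -q := by
    ext i j; simp [hq, Matrix.map_apply]
  have hricC : p * a + aᴴ * p - p * b * bᴴ * p = -q := by
    have := congrArg (fun X => X.map Complex.ofReal) hRic
    rw [hnegq] at this
    rw [ha, hb, hCT, hCT]
    simpa [hmul, hCT, Matrix.map_add, Matrix.map_sub, ← hp, ← hq, ← ha, ← hb] using this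
  have hS : kᴴ * k = p * b * bᴴ * p := by
    rw [hkH, hkval]; exact (Matrix.mul_assoc _ _ _).symm
  have hMH : Mᴴ = aᴴ - (starRingEnd ℂ c) • (kᴴ * bᴴ) := by
    rw [hM, Matrix.conjTranspose_sub, Matrix.conjTranspose_smul, hmul,
      Matrix.conjTranspose_mul]
    rfl
  have hstar : starRingEnd ℂ c + c = ((2 * δ * lam.re : ℝ) : ℂ) := by
    rw [hc]
    simp [Complex.ext_iff, Complex.add_re, Complex.add_im, Complex.mul_re, Complex.mul_im]
    ring
  have key : -(Mᴴ * p + p * M) - q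
      = ((2 * δ * lam.re - 1 : ℝ) : ℂ) • (kᴴ * k) := by
    have e1 : Mᴴ * p = aᴴ * p - (starRingEnd ℂ c) • (kᴴ * (bᴴ * p)) := by
      rw [hMH, Matrix.sub_mul, Matrix.smul_mul, Matrix.mul_assoc]
    have e2 : p * M = p * a - c • (p * b * k) := by
      rw [hM, Matrix.mul_sub, Matrix.mul_smul, hmul, ← Matrix.mul_assoc]
    have e3 : kᴴ * (bᴴ * p) = kᴴ * k := by rw [← hkval]
    have e4 : p * b * k = kᴴ * k := by rw [hkH]
    have e5 : aᴴ * p + p * a = kᴴ * k - q := by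
      rw [hS, sub_eq_add_neg, ← hricC]; abel
    rw [e1, e2, e3, e4]
    have : -((aᴴ * p - (starRingEnd ℂ c) • (kᴴ * k)) + (p * a - c • (kᴴ * k))) - q
        = -((aᴴ * p + p * a)) + ((starRingEnd ℂ c) + c) • (kᴴ * k) - q := by
      rw [add_smul]; abel
    rw [this, e5, hstar, Complex.ofReal_sub, Complex.ofReal_one, sub_smul, one_smul]
    abel
  have hr : (0:ℝ) ≤ 2 * δ * lam.re - 1 := by linarith
  have hpsd : Matrix.PosSemidef (-(Mᴴ * p + p * M) - q) := by
    rw [key]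
    set s : ℂ := ((Real.sqrt (2 * δ * lam.re - 1) : ℝ) : ℂ) with hs
    have : ((2 * δ * lam.re - 1 : ℝ) : ℂ) • (kᴴ * k) = (s • k)ᴴ * (s • k) := by
      rw [Matrix.conjTranspose_smul, Matrix.smul_mul, Matrix.mul_smul, smul_smul, hs]
      rw [RCLike.star_def, Complex.conj_ofReal, ← Complex.ofReal_mul, Real.mul_self_sqrt hr]
    rw [this]
    exact Matrix.posSemidef_conjTranspose_mul_self _
  refine ⟨hpsd, ?_⟩
  -- complex positive definiteness of mapped matrices
  have hmapPD : ∀ (R : Matrix (Fin n) (Fin n) ℝ), R.PosDef →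
      (R.map Complex.ofReal).PosDef := by
    intro R hR
    obtain ⟨L, hL⟩ : ∃ L : Matrix (Fin n) (Fin n) ℝ, R = Lᴴ * L := by
      open scoped MatrixOrder in
      exact ⟨CFC.sqrt R, by rw [(CFC.sqrt_nonneg R).posSemidef.isHermitian.eq,
        CFC.sqrt_mul_sqrt_self R hR.posSemidef.nonneg]⟩
    have hRc : R.map Complex.ofReal = (L.map Complex.ofReal)ᴴ * (L.map Complex.ofReal) := by
      have hLT : R = Lᵀ * L := by
        rw [hL]; congr 1
      rw [hLT, hmul, hCT]
    have hpsdR : (R.map Complex.ofReal).PosSemidef := by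
      rw [hRc]; exact Matrix.posSemidef_conjTranspose_mul_self _
    refine Matrix.PosDef.of_dotProduct_mulVec_pos hpsdR.1
      (fun x hx => lt_of_le_of_ne (hpsdR.dotProduct_mulVec_nonneg x) ?_)
    intro h0
    have hz : (R.map Complex.ofReal) *ᵥ x = 0 :=
      (hpsdR.dotProduct_mulVec_zero_iff x).mp h0.symm
    have hdet : (R.map Complex.ofReal).det ≠ 0 := by
      have h := RingHom.map_det Complex.ofRealHom R
      rw [RingHom.mapMatrix_apply] at h
      show (R.map (⇑Complex.ofRealHom)).det ≠ 0
      rw [← h]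
      simp only [Complex.ofRealHom_eq_coe, ne_eq, Complex.ofReal_eq_zero]
      exact ne_of_gt hR.det_pos
    exact hx (Matrix.eq_zero_of_mulVec_eq_zero hdet hz)
  have hpPD := hmapPD P hP
  have hqPD := hmapPD Q hQ
  intro μ hμ
  rw [← AlgEquiv.spectrum_eq (Matrix.toLinAlgEquiv' (R := ℂ) (n := Fin n)),
    ← Module.End.hasEigenvalue_iff_mem_spectrum] at hμ
  obtain ⟨v, hv⟩ := hμ.exists_hasEigenvector
  have hv0 : v ≠ 0 := hv.2
  have hv2 : M *ᵥ v = μ • v := by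
    have := hv.apply_eq_smul
    simpa [Matrix.toLinAlgEquiv'_apply, Matrix.toLin'_apply] using this
  set Pv : ℂ := star v ⬝ᵥ p *ᵥ v with hPv
  set Qv : ℂ := star v ⬝ᵥ q *ᵥ v with hQv
  have hpv : 0 < Pv := hpPD.dotProduct_mulVec_pos hv0
  have hqv : 0 < Qv := hqPD.dotProduct_mulVec_pos hv0
  have t1 : star v ⬝ᵥ (Mᴴ * p) *ᵥ v = star μ * Pv := by
    rw [← Matrix.mulVec_mulVec, Matrix.dotProduct_mulVec, ← Matrix.star_mulVec, hv2,
      star_smul, smul_dotProduct, smul_eq_mul, hPv]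
  have t2 : star v ⬝ᵥ (p * M) *ᵥ v = μ * Pv := by
    rw [← Matrix.mulVec_mulVec, hv2, Matrix.mulVec_smul, dotProduct_smul, smul_eq_mul]
  have h0 : 0 ≤ -(star μ * Pv + μ * Pv) - Qv := by
    have := hpsd.dotProduct_mulVec_nonneg v
    rwa [Matrix.sub_mulVec, Matrix.neg_mulVec, Matrix.add_mulVec, dotProduct_sub,
      dotProduct_neg, dotProduct_add, t1, t2, ← hQv] at this
  -- pass to real parts
  have hpvre : 0 < Pv.re := (Complex.lt_def.mp hpv).1
  have hpvim : Pv.im = 0 := ((Complex.lt_def.mp hpv).2).symm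
  have hqvre : 0 < Qv.re := (Complex.lt_def.mp hqv).1
  have h0re : 0 ≤ (-(star μ * Pv + μ * Pv) - Qv).re := (Complex.le_def.mp h0).1
  have : (-(star μ * Pv + μ * Pv) - Qv).re = -(2 * μ.re * Pv.re) - Qv.re := by
    simp [Complex.sub_re, Complex.neg_re, Complex.add_re, Complex.mul_re,
      Complex.conj_re, Complex.conj_im, hpvim]
    ring
  rw [this] at h0re
  nlinarith
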